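/- Let R be a commutative ring with identity. Then Z(R[X])² = (0) if and only if Z(R)² = (0), where R[X] is the polynomial ring over R; that is, the product of any two zero-divisors of R[X] is zero if and only if the product of any two zero-divisors of R is zero. -/

import Mathlib

/-- The set of zero-divisors of a commutative ring (including `0`). -/
def zdSet (R : Type*) [CommRing R] : Set R :=
  {x : R | ∃ y : R, y ≠ 0 ∧ x * y = 0}

/-- The set of nonzero zero-divisors. -/
def zdStar (R : Type*) [CommRing R] : Set R :=
  {x : R | x ≠ 0 ∧ ∃ y : R, y ≠ 0 ∧ x * y = 0}

/-- The zero-divisor graph `Γ(R)`: vertices are the nonzero zero-divisors, and distinct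
`x`, `y` are adjacent iff `x * y = 0`. -/
def zdGraph (R : Type*) [CommRing R] : SimpleGraph (zdStar R) where
  Adj x y := x.1 ≠ y.1 ∧ x.1 * y.1 = 0
  symm := ⟨fun x y h => ⟨h.1.symm, by rw [mul_comm]; exact h.2⟩⟩
  loopless := ⟨fun x h => h.1 rfl⟩

/-- The extended zero-divisor graph `Γ̃(R)`: vertices are the nonzero zero-divisors, and
distinct `x`, `y` are adjacent iff `x * y = 0` or `x + y ∈ Z(R)`. -/
def zdExtGraph (R : Type*) [CommRing R] : SimpleGraph (zdStar R) where
  Adj x y := x.1 ≠ y.1 ∧ (x.1 * y.1 = 0 ∨ x.1 + y.1 ∈ zdSet R)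
  symm := ⟨fun x y h => ⟨h.1.symm, by rw [mul_comm, add_comm]; exact h.2⟩⟩
  loopless := ⟨fun x h => h.1 rfl⟩

universe u

lemma coeff_mem_zdSet {R : Type u} [CommRing R] {f : Polynomial R}
    (hf : f ∈ zdSet (Polynomial R)) (n : ℕ) : f.coeff n ∈ zdSet R := by
  obtain ⟨g, hg, hfg⟩ := hf
  have hf' : f ∉ nonZeroDivisors (Polynomial R) := by
    rw [notMem_nonZeroDivisors_iff_right]
    exact ⟨g, by rwa [mul_comm], hg⟩
  obtain ⟨a, ha, haf⟩ := Polynomial.notMem_nonZeroDivisors_iff.1 hf'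
  refine ⟨a, ha, ?_⟩
  have := congrArg (fun p => Polynomial.coeff p n) haf
  simpa [mul_comm] using this

theorem stmt15 (R : Type u) [CommRing R] [Nontrivial R] :
    (∀ f ∈ zdSet (Polynomial R), ∀ g ∈ zdSet (Polynomial R), f * g = 0) ↔
      (∀ x ∈ zdSet R, ∀ y ∈ zdSet R, x * y = 0) := by
  constructor
  · intro h x hx y hy
    obtain ⟨a, ha, hxa⟩ := hx
    obtain ⟨b, hb, hyb⟩ := hy
    have hx' : (Polynomial.C x) ∈ zdSet (Polynomial R) :=
      ⟨Polynomial.C a, by simpa using ha, by rw [← Polynomial.C_mul, hxa, Polynomial.C_0]⟩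
    have hy' : (Polynomial.C y) ∈ zdSet (Polynomial R) :=
      ⟨Polynomial.C b, by simpa using hb, by rw [← Polynomial.C_mul, hyb, Polynomial.C_0]⟩
    have := h _ hx' _ hy'
    rw [← Polynomial.C_mul] at this
    exact Polynomial.C_eq_zero.mp this
  · intro h f hf g hg
    ext n
    rw [Polynomial.coeff_mul, Polynomial.coeff_zero]
    refine Finset.sum_eq_zero fun p _ => ?_
    exact h _ (coeff_mem_zdSet hf p.1) _ (coeff_mem_zdSet hg p.2)
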